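/- arXiv:1507.07209 — 5 statements merged into one kernel-verified Lean document; each statement's English description precedes it below -/
import Mathlib

section
/- Define the MDC score l(T,S) of a gene tree T with respect to a species tree S on the same leaf set X as the sum over all nontrivial clusters C of S of (k_T(C) - 1), where k_T(C) is the number of maximal clusters of T contained in C. Then for any rooted binary tree S on X, l(S,S) = 0, and conversely if l(T,S) = 0 then T = S. -/
open scoped Classical

/-- A rooted binary phylogenetic tree on the leaf set `L ⊆ X`, encoded (as usual,
and as in the paper) by its set of clusters: a binary hierarchy on `L` containing
`L` and all singletons. -/
structure PTree (X : Type*) [DecidableEq X] (L : Finset X) where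
  clusters : Finset (Finset X)
  subset_leaves : ∀ C ∈ clusters, C ⊆ L
  cluster_nonempty : ∀ C ∈ clusters, C.Nonempty
  leaves_mem : L ∈ clusters
  singleton_mem : ∀ x ∈ L, ({x} : Finset X) ∈ clusters
  hierarchy : ∀ C ∈ clusters, ∀ D ∈ clusters, C ⊆ D ∨ D ⊆ C ∨ Disjoint C D
  binary : ∀ C ∈ clusters, 1 < C.card →
    ∃ A ∈ clusters, ∃ B ∈ clusters, Disjoint A B ∧ A ∪ B = C

variable {X : Type*} [DecidableEq X]

/-- The maximal members of the cluster family `Tcl` contained in `C`. -/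
noncomputable def maxClustersIn (Tcl : Finset (Finset X)) (C : Finset X) :
    Finset (Finset X) :=
  Tcl.filter (fun D => D ⊆ C ∧ ∀ D' ∈ Tcl, D ⊂ D' → ¬ D' ⊆ C)

/-- `k_T(C)`: the number of maximal clusters of `T` contained in `C`. -/
noncomputable def kOf (Tcl : Finset (Finset X)) (C : Finset X) : ℕ :=
  (maxClustersIn Tcl C).card

/-- MDC score computed from cluster families: the sum over nontrivial clusters `C`
of the species tree (clusters other than the leaf set `L` and singletons) of
`k_T(C) - 1` (Nakhleh et al.'s formula). -/
noncomputable def mdcOfClusters (Tcl Scl : Finset (Finset X)) (L : Finset X) : ℕ :=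
  ∑ C ∈ Scl.filter (fun C => C ≠ L ∧ C.card ≠ 1), (kOf Tcl C - 1)

/-- The MDC score `l(T,S)` of a gene tree `T` with respect to a species tree `S`. -/
noncomputable def mdc {L : Finset X} (T S : PTree X L) : ℕ :=
  mdcOfClusters T.clusters S.clusters L

/-- The cluster set of the restriction `T|_Y` of `T` to the leaf set `Y`:
the nonempty intersections of clusters of `T` with `Y`. -/
noncomputable def restrictClusters {L : Finset X} (T : PTree X L) (Y : Finset X) :
    Finset (Finset X) :=
  (T.clusters.image (· ∩ Y)).filter (fun C => C.Nonempty)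

/-- The full cluster set of a rooted binary tree on leaf set `{0,1,2,3} = Fin 4`
with nontrivial clusters `a` and `b`. -/
noncomputable def cl4 (a b : Finset (Fin 4)) : Finset (Finset (Fin 4)) :=
  {Finset.univ, {0}, {1}, {2}, {3}, a, b}

lemma PTree.ext' {X : Type*} [DecidableEq X] {L : Finset X} {T S : PTree X L}
    (h : T.clusters = S.clusters) : T = S := by
  cases T; cases S; cases h; rfl

lemma maxClustersIn_self {X : Type*} [DecidableEq X] {Tcl : Finset (Finset X)}
    {C : Finset X} (hC : C ∈ Tcl) : maxClustersIn Tcl C = {C} := by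
  ext D
  simp only [maxClustersIn, Finset.mem_filter, Finset.mem_singleton]
  constructor
  · rintro ⟨hD, hDC, hmax⟩
    by_contra hne
    exact hmax C hC (lt_of_le_of_ne hDC hne) subset_rfl
  · rintro rfl
    exact ⟨hC, subset_rfl, fun D' _ h hsub => absurd (lt_of_lt_of_le h hsub) (lt_irrefl _)⟩

lemma exists_mem_maxClustersIn {X : Type*} [DecidableEq X] {Tcl : Finset (Finset X)}
    {C E : Finset X} (hE : E ∈ Tcl) (hEC : E ⊆ C) :
    ∃ D ∈ maxClustersIn Tcl C, E ⊆ D := by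
  obtain ⟨D, hD, hmax⟩ := (Tcl.filter (fun D => D ⊆ C ∧ E ⊆ D)).exists_max_image
    Finset.card ⟨E, by simp [hE, hEC]⟩
  simp only [Finset.mem_filter] at hD
  refine ⟨D, ?_, hD.2.2⟩
  simp only [maxClustersIn, Finset.mem_filter]
  refine ⟨hD.1, hD.2.1, fun D' hD' hlt hsub => ?_⟩
  have : D'.card ≤ D.card :=
    hmax D' (by simp only [Finset.mem_filter]; exact ⟨hD', hsub, hD.2.2.trans hlt.subset⟩)
  exact absurd (Finset.card_lt_card hlt) (by omega)

lemma mem_of_k_le_one {X : Type*} [DecidableEq X] {L : Finset X} (T : PTree X L)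
    {C : Finset X} (hCL : C ⊆ L) (hCne : C.Nonempty)
    (hk : kOf T.clusters C ≤ 1) : C ∈ T.clusters := by
  obtain ⟨x, hx⟩ := hCne
  obtain ⟨D, hD, -⟩ := exists_mem_maxClustersIn (T.singleton_mem x (hCL hx))
    (Finset.singleton_subset_iff.mpr hx)
  have huniq : ∀ E ∈ maxClustersIn T.clusters C, E = D :=
    fun E hE => Finset.card_le_one.mp hk E hE D hD
  have hDmem := hD
  simp only [maxClustersIn, Finset.mem_filter] at hDmem
  have hCD : C ⊆ D := by
    intro y hy
    obtain ⟨E, hE, hyE⟩ := exists_mem_maxClustersIn (T.singleton_mem y (hCL hy))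
      (Finset.singleton_subset_iff.mpr hy)
    have := huniq E hE
    subst this
    exact hyE (Finset.mem_singleton_self y)
  have : C = D := Finset.Subset.antisymm hCD hDmem.2.1
  rw [this]; exact hDmem.1

lemma count_clusters_aux {X : Type*} [DecidableEq X] {L : Finset X} (T : PTree X L) :
    ∀ n (C : Finset X), C.card ≤ n → C ∈ T.clusters →
      (T.clusters.filter (fun D => D ⊆ C)).card = 2 * C.card - 1 := by
  intro n
  induction n with
  | zero =>
    intro C hc hC
    have := T.cluster_nonempty C hC
    rw [← Finset.card_pos] at this
    omega
  | succ n ih =>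
    intro C hc hC
    have hCpos : 0 < C.card := Finset.card_pos.mpr (T.cluster_nonempty C hC)
    rcases eq_or_lt_of_le (show 1 ≤ C.card from hCpos) with h1 | h1
    · -- C.card = 1
      have hfil : T.clusters.filter (fun D => D ⊆ C) = {C} := by
        ext D
        simp only [Finset.mem_filter, Finset.mem_singleton]
        constructor
        · rintro ⟨hD, hDC⟩
          refine Finset.eq_of_subset_of_card_le hDC ?_
          have := Finset.card_pos.mpr (T.cluster_nonempty D hD)
          omega
        · rintro rfl; exact ⟨hC, subset_rfl⟩
      rw [hfil]; simp; omega
    · -- 1 < C.card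
      obtain ⟨A, hA, B, hB, hAB, hABC⟩ := T.binary C hC h1
      have hAne : A.Nonempty := T.cluster_nonempty A hA
      have hBne : B.Nonempty := T.cluster_nonempty B hB
      have hAC : A ⊆ C := hABC ▸ Finset.subset_union_left
      have hBC : B ⊆ C := hABC ▸ Finset.subset_union_right
      have hcardsum : A.card + B.card = C.card := by
        rw [← hABC]; exact (Finset.card_union_of_disjoint hAB).symm
      have hApos : 0 < A.card := Finset.card_pos.mpr hAne
      have hBpos : 0 < B.card := Finset.card_pos.mpr hBne
      have hAlt : A.card < C.card := by omega
      have hBlt : B.card < C.card := by omega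
      have hfA := ih A (by omega) hA
      have hfB := ih B (by omega) hB
      have hCnotA : C ∉ T.clusters.filter (fun D => D ⊆ A) := by
        simp only [Finset.mem_filter, not_and]
        intro _ hCA
        have : B ⊆ A := hBC.trans hCA
        obtain ⟨b, hb⟩ := hBne
        exact (Finset.disjoint_left.mp hAB (this hb)) hb
      have hCnotB : C ∉ T.clusters.filter (fun D => D ⊆ B) := by
        simp only [Finset.mem_filter, not_and]
        intro _ hCB
        have : A ⊆ B := hAC.trans hCB
        obtain ⟨a, ha⟩ := hAne
        exact (Finset.disjoint_left.mp hAB ha) (this ha)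
      have hdisj : Disjoint (T.clusters.filter (fun D => D ⊆ A))
          (T.clusters.filter (fun D => D ⊆ B)) := by
        rw [Finset.disjoint_left]
        intro D hDA hDB
        simp only [Finset.mem_filter] at hDA hDB
        obtain ⟨d, hd⟩ := T.cluster_nonempty D hDA.1
        exact (Finset.disjoint_left.mp hAB (hDA.2 hd)) (hDB.2 hd)
      have hsplit : T.clusters.filter (fun D => D ⊆ C) =
          insert C (T.clusters.filter (fun D => D ⊆ A) ∪ T.clusters.filter (fun D => D ⊆ B)) := by
        ext D
        simp only [Finset.mem_filter, Finset.mem_insert, Finset.mem_union]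
        constructor
        · rintro ⟨hD, hDC⟩
          by_cases hne : D = C
          · exact Or.inl hne
          refine Or.inr ?_
          rcases T.hierarchy D hD A hA with hDA | hAD | hdAB
          · exact Or.inl ⟨hD, hDA⟩
          · rcases T.hierarchy D hD B hB with hDB | hBD | hdBB
            · obtain ⟨a, ha⟩ := hAne
              exact absurd (hDB (hAD ha)) (Finset.disjoint_left.mp hAB ha)
            · exfalso
              apply hne
              apply Finset.Subset.antisymm hDC
              rw [← hABC]
              exact Finset.union_subset hAD hBD
            · refine Or.inl ⟨hD, fun d hd => ?_⟩
              have := hDC hd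
              rw [← hABC, Finset.mem_union] at this
              rcases this with h | h
              · exact h
              · exact absurd h (Finset.disjoint_left.mp hdBB hd)
          · refine Or.inr ⟨hD, fun d hd => ?_⟩
            have := hDC hd
            rw [← hABC, Finset.mem_union] at this
            rcases this with h | h
            · exact absurd h (Finset.disjoint_left.mp hdAB hd)
            · exact h
        · rintro (rfl | ⟨hD, hDA⟩ | ⟨hD, hDB⟩)
          · exact ⟨hC, subset_rfl⟩
          · exact ⟨hD, hDA.trans hAC⟩
          · exact ⟨hD, hDB.trans hBC⟩
      rw [hsplit, Finset.card_insert_of_notMem (by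
          rw [Finset.mem_union]; tauto),
        Finset.card_union_of_disjoint hdisj, hfA, hfB]
      omega

lemma card_clusters {X : Type*} [DecidableEq X] {L : Finset X} (T : PTree X L) :
    T.clusters.card = 2 * L.card - 1 := by
  have h := count_clusters_aux T L.card L le_rfl T.leaves_mem
  rwa [Finset.filter_true_of_mem (fun C hC => T.subset_leaves C hC)] at h

/-- `l(S,S) = 0`, and conversely `l(T,S) = 0` implies `T = S` (for `|X| ≥ 2`). -/
theorem stmt5 {X : Type*} [DecidableEq X] (L : Finset X) (hL : 2 ≤ L.card)
    (T S : PTree X L) :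
    mdc S S = 0 ∧ (mdc T S = 0 → T = S) := by
  constructor
  · apply Finset.sum_eq_zero
    intro C hC
    rw [Finset.mem_filter] at hC
    rw [kOf, maxClustersIn_self hC.1]
    simp
  · intro h
    have hsub : S.clusters ⊆ T.clusters := by
      intro C hC
      by_cases hCL : C = L
      · exact hCL ▸ T.leaves_mem
      by_cases hC1 : C.card = 1
      · obtain ⟨x, rfl⟩ := Finset.card_eq_one.mp hC1
        exact T.singleton_mem x (S.subset_leaves _ hC (Finset.mem_singleton_self x))
      · have hmem : C ∈ S.clusters.filter (fun C => C ≠ L ∧ C.card ≠ 1) := by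
          simp only [Finset.mem_filter]; exact ⟨hC, hCL, hC1⟩
        have hterm : kOf T.clusters C - 1 = 0 :=
          (Finset.sum_eq_zero_iff.mp h) C hmem
        exact mem_of_k_le_one T (S.subset_leaves C hC) (S.cluster_nonempty C hC)
          (by omega)
    have hcard : T.clusters.card ≤ S.clusters.card := by
      rw [card_clusters, card_clusters]
    exact PTree.ext' (Finset.eq_of_subset_of_card_le hsub hcard).symm
end

section
/- Let X = {1,2,3,4} and let G_m be the multiset of gene trees consisting of 11 copies of T2, 10 copies of T4, 2 copies of T6, 3 copies of T7 and 3 copies of T15, where T2 has nontrivial clusters {1,2},{1,2,4}; T4 has clusters {1,3},{1,3,4}; T6 has clusters {1,4},{1,3,4}; T7 has clusters {2,3},{1,2,3}; T15 has clusters {1,4},{2,3}. Then the tree T1 with clusters {1,2},{1,2,3} is the unique minimizer over all 15 rooted binary trees S on X of the total MDC score L(S) = Σ_{T in G_m} l(T,S), with L(T1) = 46. -/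
open scoped Classical

variable {X : Type*} [DecidableEq X]

/- ### Auxiliary material -/

/-- Computable clone of `kOf`. -/
def kOfc (Tcl : Finset (Finset (Fin 4))) (C : Finset (Fin 4)) : ℕ :=
  (Tcl.filter (fun D => D ⊆ C ∧ ∀ D' ∈ Tcl, D ⊂ D' → ¬ D' ⊆ C)).card

lemma kOf_eq_kOfc (Tcl C) : kOf Tcl C = kOfc Tcl C := by
  unfold kOf maxClustersIn kOfc
  congr 1
  apply Finset.filter_congr_decidable

/-- Total weight of a single species-tree cluster `C`. -/
noncomputable def Wmdc (C : Finset (Fin 4)) : ℕ :=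
  11 * (kOfc (cl4 {0,1} {0,1,3}) C - 1) + 10 * (kOfc (cl4 {0,2} {0,2,3}) C - 1) +
  2 * (kOfc (cl4 {0,3} {0,2,3}) C - 1) + 3 * (kOfc (cl4 {1,2} {0,1,2}) C - 1) +
  3 * (kOfc (cl4 {0,3} {1,2}) C - 1)

lemma Wmdc_pos : ∀ C : Finset (Fin 4), C.card = 2 ∨ C.card = 3 → 1 ≤ Wmdc C := by decide

lemma Wmdc_pair22 : ∀ A B : Finset (Fin 4), A.card = 2 → B.card = 2 → Disjoint A B →
    47 ≤ Wmdc A + Wmdc B := by decide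

lemma Wmdc_pair23 : ∀ A B : Finset (Fin 4), A.card = 2 → B.card = 3 → A ⊆ B →
    (A = {0,1} ∧ B = {0,1,2}) ∨ 47 ≤ Wmdc A + Wmdc B := by decide

lemma Wmdc_T1 : Wmdc {0,1} + Wmdc {0,1,2} = 46 := by decide

lemma ptree_ext {S T : PTree (Fin 4) Finset.univ} (h : S.clusters = T.clusters) :
    S = T := by
  cases S; cases T; cases h; rfl

/-- Structural lemma: every binary tree on 4 leaves has either two disjoint 2-clusters
or a 2-cluster strictly inside a 3-cluster. -/
lemma struct (S : PTree (Fin 4) Finset.univ) :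
    ∃ A ∈ S.clusters, ∃ B ∈ S.clusters,
      (A.card = 2 ∧ B.card = 2 ∧ Disjoint A B) ∨
      (A.card = 2 ∧ B.card = 3 ∧ A ⊆ B ∧ A ≠ B) := by
  obtain ⟨A, hA, B, hB, hdisj, hun⟩ := S.binary _ S.leaves_mem (by decide)
  have hcard : A.card + B.card = 4 := by
    rw [← Finset.card_union_of_disjoint hdisj, hun]; decide
  have hA1 : 1 ≤ A.card := Finset.card_pos.2 (S.cluster_nonempty _ hA)
  have hB1 : 1 ≤ B.card := Finset.card_pos.2 (S.cluster_nonempty _ hB)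
  -- helper for the (1,3) shape
  have sub3 : ∀ D ∈ S.clusters, D.card = 3 →
      ∃ A ∈ S.clusters, ∃ B ∈ S.clusters,
        (A.card = 2 ∧ B.card = 2 ∧ Disjoint A B) ∨
        (A.card = 2 ∧ B.card = 3 ∧ A ⊆ B ∧ A ≠ B) := by
    intro D hD hD3
    obtain ⟨A', hA', B', hB', hdisj', hun'⟩ := S.binary _ hD (by omega)
    have hcard' : A'.card + B'.card = 3 := by
      rw [← Finset.card_union_of_disjoint hdisj', hun', hD3]
    have hA1' : 1 ≤ A'.card := Finset.card_pos.2 (S.cluster_nonempty _ hA')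
    have hB1' : 1 ≤ B'.card := Finset.card_pos.2 (S.cluster_nonempty _ hB')
    rcases Nat.lt_or_ge A'.card 2 with h | h
    · refine ⟨B', hB', D, hD, Or.inr ⟨by omega, hD3, ?_, ?_⟩⟩
      · rw [← hun']; exact Finset.subset_union_right
      · intro hEq; rw [hEq] at hcard'; omega
    · refine ⟨A', hA', D, hD, Or.inr ⟨by omega, hD3, ?_, ?_⟩⟩
      · rw [← hun']; exact Finset.subset_union_left
      · intro hEq; rw [hEq] at hcard'; omega
  rcases Nat.lt_or_ge A.card 2 with h | h
  · exact sub3 B hB (by omega)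
  rcases Nat.lt_or_ge B.card 2 with h' | h'
  · exact sub3 A hA (by omega)
  exact ⟨A, hA, B, hB, Or.inl ⟨by omega, by omega, hdisj⟩⟩

lemma nontrivial_mem (S : PTree (Fin 4) Finset.univ) {C : Finset (Fin 4)}
    (hC : C ∈ S.clusters) (h2or3 : C.card = 2 ∨ C.card = 3) :
    C ∈ S.clusters.filter (fun C => C ≠ Finset.univ ∧ C.card ≠ 1) := by
  refine Finset.mem_filter.2 ⟨hC, ?_, by omega⟩
  intro hEq
  rw [hEq] at h2or3
  simp [Finset.card_univ] at h2or3

lemma card_mem_filter (S : PTree (Fin 4) Finset.univ) {C : Finset (Fin 4)}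
    (hC : C ∈ S.clusters.filter (fun C => C ≠ Finset.univ ∧ C.card ≠ 1)) :
    C.card = 2 ∨ C.card = 3 := by
  obtain ⟨hmem, hne, hc1⟩ := Finset.mem_filter.1 hC
  have h1 : 1 ≤ C.card := Finset.card_pos.2 (S.cluster_nonempty _ hmem)
  have h4 : C.card ≤ 4 := by
    have := Finset.card_le_card (S.subset_leaves _ hmem)
    simpa using this
  have : C.card ≠ 4 := by
    intro h
    exact hne (Finset.eq_of_subset_of_card_le (S.subset_leaves _ hmem) (by simp [h]))
  omega

/-- Example 1 ... -/
theorem stmt10 (T1 T2 T4 T6 T7 T15 : PTree (Fin 4) Finset.univ)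
    (h1 : T1.clusters = cl4 {0,1} {0,1,2})
    (h2 : T2.clusters = cl4 {0,1} {0,1,3})
    (h4 : T4.clusters = cl4 {0,2} {0,2,3})
    (h6 : T6.clusters = cl4 {0,3} {0,2,3})
    (h7 : T7.clusters = cl4 {1,2} {0,1,2})
    (h15 : T15.clusters = cl4 {0,3} {1,2}) :
    11 * mdc T2 T1 + 10 * mdc T4 T1 + 2 * mdc T6 T1 + 3 * mdc T7 T1 + 3 * mdc T15 T1 = 46 ∧
    ∀ S : PTree (Fin 4) Finset.univ, S ≠ T1 →
      11 * mdc T2 T1 + 10 * mdc T4 T1 + 2 * mdc T6 T1 + 3 * mdc T7 T1 + 3 * mdc T15 T1 < 11 * mdc T2 S + 10 * mdc T4 S + 2 * mdc T6 S + 3 * mdc T7 S + 3 * mdc T15 S := by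
  have key : ∀ (S : PTree (Fin 4) Finset.univ),
      11 * mdc T2 S + 10 * mdc T4 S + 2 * mdc T6 S + 3 * mdc T7 S + 3 * mdc T15 S =
      ∑ C ∈ S.clusters.filter (fun C => C ≠ Finset.univ ∧ C.card ≠ 1), Wmdc C := by
    intro S
    simp only [mdc, mdcOfClusters, h2, h4, h6, h7, h15, Wmdc, kOf_eq_kOfc,
      Finset.mul_sum, ← Finset.sum_add_distrib]
  -- value at T1
  have hT1filter : T1.clusters.filter (fun C => C ≠ Finset.univ ∧ C.card ≠ 1) =
      ({{0,1}, {0,1,2}} : Finset (Finset (Fin 4))) := by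
    rw [h1]
    decide
  have hval : 11 * mdc T2 T1 + 10 * mdc T4 T1 + 2 * mdc T6 T1 + 3 * mdc T7 T1 + 3 * mdc T15 T1 = 46 := by
    rw [key T1, hT1filter]
    rw [Finset.sum_pair (by decide)]
    exact Wmdc_T1
  refine ⟨hval, ?_⟩
  intro S hS
  rw [hval, key S]
  set F := S.clusters.filter (fun C => C ≠ Finset.univ ∧ C.card ≠ 1) with hF
  obtain ⟨A, hA, B, hB, hshape⟩ := struct S
  have hA2 : A.card = 2 := by rcases hshape with ⟨h,_⟩|⟨h,_⟩ <;> exact h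
  have hAF : A ∈ F := nontrivial_mem S hA (Or.inl hA2)
  have hBF : B ∈ F := by
    rcases hshape with ⟨_,h,_⟩|⟨_,h,_⟩
    · exact nontrivial_mem S hB (Or.inl h)
    · exact nontrivial_mem S hB (Or.inr h)
  have hAB : A ≠ B := by
    rcases hshape with ⟨h2,_,hd⟩|⟨_,_,_,hne⟩
    · intro hEq
      rw [hEq, disjoint_self] at hd
      rw [hEq, hd] at h2; simp at h2
    · exact hne
  have hpairsub : ({A, B} : Finset (Finset (Fin 4))) ⊆ F := by
    intro C hC
    rcases Finset.mem_insert.1 hC with h | h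
    · exact h ▸ hAF
    · exact (Finset.mem_singleton.1 h) ▸ hBF
  have hlow : Wmdc A + Wmdc B ≤ ∑ C ∈ F, Wmdc C := by
    calc Wmdc A + Wmdc B = ∑ C ∈ ({A, B} : Finset (Finset (Fin 4))), Wmdc C := by
          rw [Finset.sum_pair hAB]
      _ ≤ ∑ C ∈ F, Wmdc C := Finset.sum_le_sum_of_subset hpairsub
  rcases hshape with ⟨hA2', hB2, hd⟩ | ⟨_, hB3, hsub, _⟩
  · have := Wmdc_pair22 A B hA2' hB2 hd
    omega
  · rcases Wmdc_pair23 A B hA2 hB3 hsub with ⟨hAeq, hBeq⟩ | hge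
    · -- A = {0,1}, B = {0,1,2}
      subst hAeq; subst hBeq
      by_cases hextra : ∃ C ∈ F, C ≠ ({0,1} : Finset (Fin 4)) ∧ C ≠ ({0,1,2} : Finset (Fin 4))
      · obtain ⟨C, hCF, hC1, hC2⟩ := hextra
        have hWC : 1 ≤ Wmdc C := Wmdc_pos C (card_mem_filter S hCF)
        have hsub3 : ({C, {0,1}, {0,1,2}} : Finset (Finset (Fin 4))) ⊆ F := by
          intro D hD
          rcases Finset.mem_insert.1 hD with h | h
          · exact h ▸ hCF
          · exact hpairsub h
        have hsum3 : ∑ D ∈ ({C, {0,1}, {0,1,2}} : Finset (Finset (Fin 4))), Wmdc D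
            ≤ ∑ D ∈ F, Wmdc D := Finset.sum_le_sum_of_subset hsub3
        rw [Finset.sum_insert (by simp [hC1, hC2]), Finset.sum_pair (by decide)] at hsum3
        have := Wmdc_T1
        omega
      · -- F = {{0,1},{0,1,2}}; then S = T1, contradiction
        exfalso
        apply hS
        apply ptree_ext
        rw [h1]
        push_neg at hextra
        have hFeq : F = ({{0,1}, {0,1,2}} : Finset (Finset (Fin 4))) := by
          apply Finset.Subset.antisymm
          · intro C hC
            by_contra hC'
            simp only [Finset.mem_insert, Finset.mem_singleton, not_or] at hC'
            exact hC'.2 (hextra C hC hC'.1)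
          · exact hpairsub
        ext C
        simp only [cl4, Finset.mem_insert, Finset.mem_singleton]
        constructor
        · intro hC
          by_cases hu : C = Finset.univ
          · exact Or.inl hu
          by_cases hc1 : C.card = 1
          · obtain ⟨x, hx⟩ := Finset.card_eq_one.1 hc1
            subst hx
            fin_cases x <;> simp
          · have : C ∈ F := Finset.mem_filter.2 ⟨hC, hu, hc1⟩
            rw [hFeq] at this
            simp only [Finset.mem_insert, Finset.mem_singleton] at this
            tauto
        · intro hC
          have h01 : ({0,1} : Finset (Fin 4)) ∈ S.clusters := by
            have : ({0,1} : Finset (Fin 4)) ∈ F := by rw [hFeq]; simp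
            exact (Finset.mem_filter.1 this).1
          have h012 : ({0,1,2} : Finset (Fin 4)) ∈ S.clusters := by
            have : ({0,1,2} : Finset (Fin 4)) ∈ F := by rw [hFeq]; simp
            exact (Finset.mem_filter.1 this).1
          rcases hC with h|h|h|h|h|h|h <;> subst h
          · exact S.leaves_mem
          · exact S.singleton_mem 0 (Finset.mem_univ _)
          · exact S.singleton_mem 1 (Finset.mem_univ _)
          · exact S.singleton_mem 2 (Finset.mem_univ _)
          · exact S.singleton_mem 3 (Finset.mem_univ _)
          · exact h01
          · exact h012
    · omega
end

section
/- With G_m as in Example 1 (11 copies of T2 with clusters {1,2},{1,2,4}; 10 copies of T4 with clusters {1,3},{1,3,4}; 2 copies of T6 with clusters {1,4},{1,3,4}; 3 copies of T7 with clusters {2,3},{1,2,3}; 3 copies of T15 with clusters {1,4},{2,3}), for every 3-element subset Y of X = {1,2,3,4}, the restriction of T1 (clusters {1,2},{1,2,3}) to Y is NOT a minimizer of the total MDC score Σ_{T in G_m} l(T|_Y, S') over rooted binary trees S' on Y. -/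
open scoped Classical

variable {X : Type*} [DecidableEq X]

/-- Example 1, non-heredity: for every 3-element subset `Y` of the taxa, the
restriction `T₁|_Y` is not a minimizer of the total MDC score of the restricted
gene trees over rooted binary trees on `Y`. -/
theorem stmt11 (T1 T2 T4 T6 T7 T15 : PTree (Fin 4) Finset.univ)
    (h1 : T1.clusters = cl4 {0,1} {0,1,2})
    (h2 : T2.clusters = cl4 {0,1} {0,1,3})
    (h4 : T4.clusters = cl4 {0,2} {0,2,3})
    (h6 : T6.clusters = cl4 {0,3} {0,2,3})
    (h7 : T7.clusters = cl4 {1,2} {0,1,2})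
    (h15 : T15.clusters = cl4 {0,3} {1,2}) :
    ∀ Y : Finset (Fin 4), Y.card = 3 →
      ∃ S' : PTree (Fin 4) Y,
        11 * mdcOfClusters (restrictClusters T2 Y) S'.clusters Y + 10 * mdcOfClusters (restrictClusters T4 Y) S'.clusters Y + 2 * mdcOfClusters (restrictClusters T6 Y) S'.clusters Y + 3 * mdcOfClusters (restrictClusters T7 Y) S'.clusters Y + 3 * mdcOfClusters (restrictClusters T15 Y) S'.clusters Y <
        11 * mdcOfClusters (restrictClusters T2 Y) (restrictClusters T1 Y) Y + 10 * mdcOfClusters (restrictClusters T4 Y) (restrictClusters T1 Y) Y + 2 * mdcOfClusters (restrictClusters T6 Y) (restrictClusters T1 Y) Y + 3 * mdcOfClusters (restrictClusters T7 Y) (restrictClusters T1 Y) Y + 3 * mdcOfClusters (restrictClusters T15 Y) (restrictClusters T1 Y) Y := by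
  have key : ∀ Y : Finset (Fin 4), Y.card = 3 →
      Y = {0,1,2} ∨ Y = {0,1,3} ∨ Y = {0,2,3} ∨ Y = {1,2,3} := by decide
  intro Y hY
  rcases key Y hY with rfl | rfl | rfl | rfl
  · refine ⟨⟨({{0,1,2},{0},{1},{2},{0,2}} : Finset (Finset (Fin 4))),
      by decide, by decide, by decide, by decide, by decide, by decide⟩, ?_⟩
    simp only [restrictClusters, h1, h2, h4, h6, h7, h15]; decide
  · refine ⟨⟨({{0,1,3},{0},{1},{3},{0,3}} : Finset (Finset (Fin 4))),
      by decide, by decide, by decide, by decide, by decide, by decide⟩, ?_⟩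
    simp only [restrictClusters, h1, h2, h4, h6, h7, h15]; decide
  · refine ⟨⟨({{0,2,3},{0},{2},{3},{0,3}} : Finset (Finset (Fin 4))),
      by decide, by decide, by decide, by decide, by decide, by decide⟩, ?_⟩
    simp only [restrictClusters, h1, h2, h4, h6, h7, h15]; decide
  · refine ⟨⟨({{1,2,3},{1},{2},{3},{1,3}} : Finset (Finset (Fin 4))),
      by decide, by decide, by decide, by decide, by decide, by decide⟩, ?_⟩
    simp only [restrictClusters, h1, h2, h4, h6, h7, h15]; decide
end

section
/- With G_m as in Example 2 (2 copies of T1 with clusters {1,2},{1,2,3}; 2 copies of T12 with clusters {3,4},{2,3,4}; 1 copy of T14 with clusters {1,3},{2,4}; 1 copy of T15 with clusters {1,4},{2,3}), for every 3-element subset Y of {1,2,3,4}, the restriction T13|_Y of the tree T13 (clusters {1,2},{3,4}) is not a minimizer of Σ_{T in G_m} l(T|_Y, S') over rooted binary trees S' on Y; in fact its score is 4 on each Y while the minimum is 3. -/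
open scoped Classical

variable {X : Type*} [DecidableEq X]

lemma pair_filter {Y : Finset (Fin 4)} (hY : Y.card = 3) (S : PTree (Fin 4) Y) :
    ∃ P, P ⊆ Y ∧ P.card = 2 ∧
      S.clusters.filter (fun C => C ≠ Y ∧ C.card ≠ 1) = {P} := by
  obtain ⟨A, hA, B, hB, hAB, hABY⟩ := S.binary Y S.leaves_mem (by omega)
  have hcard : A.card + B.card = 3 := by
    rw [← Finset.card_union_of_disjoint hAB, hABY, hY]
  have hAne := Finset.card_pos.mpr (S.cluster_nonempty A hA)
  have hBne := Finset.card_pos.mpr (S.cluster_nonempty B hB)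
  obtain ⟨P, hPmem, hP2⟩ : ∃ P ∈ S.clusters, P.card = 2 := by
    rcases (by omega : A.card = 2 ∨ B.card = 2) with h | h
    exacts [⟨A, hA, h⟩, ⟨B, hB, h⟩]
  have hPY := S.subset_leaves P hPmem
  refine ⟨P, hPY, hP2, ?_⟩
  ext C
  simp only [Finset.mem_filter, Finset.mem_singleton]
  constructor
  · rintro ⟨hC, hCne, hC1⟩
    have hCY := S.subset_leaves C hC
    have hCpos := Finset.card_pos.mpr (S.cluster_nonempty C hC)
    have hclt : C.card < 3 := by
      have := Finset.card_lt_card (Finset.ssubset_iff_subset_ne.mpr ⟨hCY, hCne⟩)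
      omega
    have hc2 : C.card = 2 := by omega
    rcases S.hierarchy C hC P hPmem with h | h | h
    · exact Finset.eq_of_subset_of_card_le h (by omega)
    · exact (Finset.eq_of_subset_of_card_le h (by omega)).symm
    · exfalso
      have h4 := Finset.card_union_of_disjoint h
      have := Finset.card_le_card (Finset.union_subset hCY hPY)
      omega
  · rintro rfl
    refine ⟨hPmem, fun h => ?_, by omega⟩
    rw [h, hY] at hP2; omega

lemma lower_bound {Y : Finset (Fin 4)} (hY : Y.card = 3)
    (c1 c12 c14 c15 : Finset (Finset (Fin 4)))
    (hmin : ∀ P ⊆ Y, P.card = 2 →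
      3 ≤ 2 * (kOf c1 P - 1) + 2 * (kOf c12 P - 1) + 1 * (kOf c14 P - 1)
        + 1 * (kOf c15 P - 1))
    (S' : PTree (Fin 4) Y) :
    3 ≤ 2 * mdcOfClusters c1 S'.clusters Y + 2 * mdcOfClusters c12 S'.clusters Y
      + 1 * mdcOfClusters c14 S'.clusters Y + 1 * mdcOfClusters c15 S'.clusters Y := by
  obtain ⟨P, hPY, hP2, hfilt⟩ := pair_filter hY S'
  have hmdc : ∀ Tcl : Finset (Finset (Fin 4)),
      mdcOfClusters Tcl S'.clusters Y = kOf Tcl P - 1 := by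
    intro Tcl
    rw [mdcOfClusters, hfilt, Finset.sum_singleton]
  rw [hmdc, hmdc, hmdc, hmdc]
  exact hmin P hPY hP2

/-- Example 2, non-heredity: for every 3-element subset `Y`, the restricted total MDC
score of `T₁₃|_Y` is 4, while the minimum over rooted binary trees on `Y` is 3. -/
theorem stmt14 (T1 T12 T13 T14 T15 : PTree (Fin 4) Finset.univ)
    (h1 : T1.clusters = cl4 {0,1} {0,1,2})
    (h12 : T12.clusters = cl4 {2,3} {1,2,3})
    (h13 : T13.clusters = cl4 {0,1} {2,3})
    (h14 : T14.clusters = cl4 {0,2} {1,3})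
    (h15 : T15.clusters = cl4 {0,3} {1,2}) :
    ∀ Y : Finset (Fin 4), Y.card = 3 →
      (2 * mdcOfClusters (restrictClusters T1 Y) (restrictClusters T13 Y) Y + 2 * mdcOfClusters (restrictClusters T12 Y) (restrictClusters T13 Y) Y + 1 * mdcOfClusters (restrictClusters T14 Y) (restrictClusters T13 Y) Y + 1 * mdcOfClusters (restrictClusters T15 Y) (restrictClusters T13 Y) Y = 4) ∧
      (∀ S' : PTree (Fin 4) Y, 3 ≤ 2 * mdcOfClusters (restrictClusters T1 Y) S'.clusters Y + 2 * mdcOfClusters (restrictClusters T12 Y) S'.clusters Y + 1 * mdcOfClusters (restrictClusters T14 Y) S'.clusters Y + 1 * mdcOfClusters (restrictClusters T15 Y) S'.clusters Y) ∧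
      (∃ S' : PTree (Fin 4) Y, 2 * mdcOfClusters (restrictClusters T1 Y) S'.clusters Y + 2 * mdcOfClusters (restrictClusters T12 Y) S'.clusters Y + 1 * mdcOfClusters (restrictClusters T14 Y) S'.clusters Y + 1 * mdcOfClusters (restrictClusters T15 Y) S'.clusters Y = 3) := by
  intro Y hY
  have hYc : Y = {0,1,2} ∨ Y = {0,1,3} ∨ Y = {0,2,3} ∨ Y = {1,2,3} := by
    have : ∀ Z : Finset (Fin 4), Z.card = 3 →
        Z = {0,1,2} ∨ Z = {0,1,3} ∨ Z = {0,2,3} ∨ Z = {1,2,3} := by decide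
    exact this Y hY
  rcases hYc with rfl | rfl | rfl | rfl <;>
  refine ⟨by simp only [restrictClusters, h1, h12, h13, h14, h15]; decide,
    lower_bound hY _ _ _ _
      (by simp only [restrictClusters, h1, h12, h14, h15]; decide), ?_⟩
  · exact ⟨⟨{{0,1,2}, {0}, {1}, {2}, {1,2}}, by decide, by decide, by decide,
      by decide, by decide, by decide⟩,
      by simp only [restrictClusters, h1, h12, h14, h15]; decide⟩
  · exact ⟨⟨{{0,1,3}, {0}, {1}, {3}, {1,3}}, by decide, by decide, by decide,
      by decide, by decide, by decide⟩,
      by simp only [restrictClusters, h1, h12, h14, h15]; decide⟩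
  · exact ⟨⟨{{0,2,3}, {0}, {2}, {3}, {0,2}}, by decide, by decide, by decide,
      by decide, by decide, by decide⟩,
      by simp only [restrictClusters, h1, h12, h14, h15]; decide⟩
  · exact ⟨⟨{{1,2,3}, {1}, {2}, {3}, {1,2}}, by decide, by decide, by decide,
      by decide, by decide, by decide⟩,
      by simp only [restrictClusters, h1, h12, h14, h15]; decide⟩
end

section
/- Let T and S be rooted binary trees on a common leaf set X of size 4 whose cluster sets are disjoint apart from the trivial clusters (X and singletons), and suppose both T and S are caterpillars whose 3-element clusters are distinct. If additionally the 2-element cluster of T is not contained in the 3-element cluster of S and vice versa, then l(T,S) = 3, the maximum possible value. -/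
open scoped Classical

variable {X : Type*} [DecidableEq X]

/-- If `T` and `S` are caterpillars on a common 4-element leaf set whose cluster sets
share only trivial clusters, with distinct 3-element clusters, and the 2-element
cluster of neither tree is contained in the 3-element cluster of the other, then
`l(T,S) = 3`, the maximum possible value. -/
theorem stmt18 {X : Type*} [DecidableEq X] (L : Finset X) (hL : L.card = 4)
    (T S : PTree X L)
    (hdisj : ∀ C ∈ T.clusters, C ∈ S.clusters → C = L ∨ C.card = 1)
    (cT cS : Finset X)
    (hcT : cT ∈ T.clusters) (hcT3 : cT.card = 3)
    (hcS : cS ∈ S.clusters) (hcS3 : cS.card = 3)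
    (hne : cT ≠ cS)
    (h2T : ∀ A ∈ T.clusters, A.card = 2 → ¬ A ⊆ cS)
    (h2S : ∀ B ∈ S.clusters, B.card = 2 → ¬ B ⊆ cT) :
    mdc T S = 3 := by
  classical
  have hcSL : cS ⊆ L := S.subset_leaves cS hcS
  -- every cluster of T contained in cS is a singleton
  have key : ∀ D ∈ T.clusters, D ⊆ cS → D.card = 1 := by
    intro D hD hDsub
    have h1 : 1 ≤ D.card := Finset.card_pos.mpr (T.cluster_nonempty D hD)
    have h3 : D.card ≤ 3 := hcS3 ▸ Finset.card_le_card hDsub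
    rcases (by omega : D.card = 1 ∨ D.card = 2 ∨ D.card = 3) with h | h | h
    · exact h
    · exact absurd hDsub (h2T D hD h)
    · exfalso
      have hDe : D = cS := Finset.eq_of_subset_of_card_le hDsub (by omega)
      rcases hdisj D hD (hDe ▸ hcS) with h4 | h4
      · rw [h4] at h; omega
      · omega
  -- maximal T-clusters inside any subset of cS are the singletons
  have hmax : ∀ Y : Finset X, Y ⊆ cS →
      maxClustersIn T.clusters Y = Y.image (fun x => ({x} : Finset X)) := by
    intro Y hY
    ext D
    simp only [maxClustersIn, Finset.mem_filter, Finset.mem_image]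
    constructor
    · rintro ⟨hD, hDsub, -⟩
      obtain ⟨x, hx⟩ := Finset.card_eq_one.mp (key D hD (hDsub.trans hY))
      exact ⟨x, hDsub (hx ▸ Finset.mem_singleton_self x), hx.symm⟩
    · rintro ⟨x, hxY, rfl⟩
      have hxL : x ∈ L := hcSL (hY hxY)
      refine ⟨T.singleton_mem x hxL, Finset.singleton_subset_iff.mpr hxY, ?_⟩
      intro D' hD' hss hsub
      have h1 := key D' hD' (hsub.trans hY)
      have h2 := Finset.card_lt_card hss
      simp only [Finset.card_singleton] at h2
      omega
  have hkY : ∀ Y : Finset X, Y ⊆ cS → kOf T.clusters Y = Y.card := by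
    intro Y hY
    rw [kOf, hmax Y hY,
      Finset.card_image_of_injective _ (fun a b h => by
        simpa using Finset.singleton_injective h)]
  -- the 2-cluster of S inside cS
  obtain ⟨A, hA, B, hB, hAB, hABu⟩ := S.binary cS hcS (by omega)
  have hcard : A.card + B.card = 3 := by
    rw [← Finset.card_union_of_disjoint hAB, hABu, hcS3]
  have hA1 : 1 ≤ A.card := Finset.card_pos.mpr (S.cluster_nonempty A hA)
  have hB1 : 1 ≤ B.card := Finset.card_pos.mpr (S.cluster_nonempty B hB)
  obtain ⟨bS, hbS, hbS2, hbSsub⟩ : ∃ bS ∈ S.clusters, bS.card = 2 ∧ bS ⊆ cS := by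
    rcases (by omega : A.card = 2 ∨ B.card = 2) with h | h
    · exact ⟨A, hA, h, hABu ▸ Finset.subset_union_left⟩
    · exact ⟨B, hB, h, hABu ▸ Finset.subset_union_right⟩
  -- the nontrivial clusters of S are exactly cS and bS
  have hfilter : S.clusters.filter (fun C => C ≠ L ∧ C.card ≠ 1) = {cS, bS} := by
    ext C
    simp only [Finset.mem_filter, Finset.mem_insert, Finset.mem_singleton]
    constructor
    · rintro ⟨hC, hCL, hC1⟩
      have hCsub := S.subset_leaves C hC
      have h1 : 1 ≤ C.card := Finset.card_pos.mpr (S.cluster_nonempty C hC)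
      have h4 : C.card ≤ 4 := hL ▸ Finset.card_le_card hCsub
      have hC4 : C.card ≠ 4 := fun h =>
        hCL (Finset.eq_of_subset_of_card_le hCsub (by omega))
      have hint : (C ∩ cS).Nonempty := by
        rw [← Finset.card_pos]
        have h5 := Finset.card_inter_add_card_union C cS
        have hU : (C ∪ cS).card ≤ 4 :=
          hL ▸ Finset.card_le_card (Finset.union_subset hCsub hcSL)
        omega
      rcases S.hierarchy C hC cS hcS with h | h | h
      · rcases (by omega : C.card = 2 ∨ C.card = 3) with h2 | h3
        · right
          have hint2 : (C ∩ bS).Nonempty := by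
            rw [← Finset.card_pos]
            have h5 := Finset.card_inter_add_card_union C bS
            have hU : (C ∪ bS).card ≤ 3 :=
              hcS3 ▸ Finset.card_le_card (Finset.union_subset h hbSsub)
            omega
          rcases S.hierarchy C hC bS hbS with h6 | h6 | h6
          · exact Finset.eq_of_subset_of_card_le h6 (by omega)
          · exact (Finset.eq_of_subset_of_card_le h6 (by omega)).symm
          · exact absurd (Finset.disjoint_iff_inter_eq_empty.mp h6)
              (Finset.nonempty_iff_ne_empty.mp hint2)
        · left; exact Finset.eq_of_subset_of_card_le h (by omega)
      · left; exact (Finset.eq_of_subset_of_card_le h (by omega)).symm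
      · exact absurd (Finset.disjoint_iff_inter_eq_empty.mp h)
          (Finset.nonempty_iff_ne_empty.mp hint)
    · rintro (rfl | rfl)
      · exact ⟨hcS, fun h => by rw [h] at hcS3; omega, by omega⟩
      · exact ⟨hbS, fun h => by rw [h] at hbS2; omega, by omega⟩
  have hne2 : cS ≠ bS := fun h => by rw [h] at hcS3; omega
  rw [mdc, mdcOfClusters, hfilter, Finset.sum_insert (by simpa using hne2),
    Finset.sum_singleton, hkY cS (le_refl _), hkY bS hbSsub, hcS3, hbS2]
end
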